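/- Let A ∈ ℝ^{m×n} be a matrix with no zero rows, let λ > 0, and define the (regularized) leverage scores ψ_i := [A(AᵀA + λI)⁻¹Aᵀ]_{ii} for i = 1,…,m (each ψ_i > 0). Then for every a ∈ ℝ^n: Σ_{i=1}^m (1/ψ_i)·(A(AᵀA + λI)⁻¹ a)_i⁴ ≤ (aᵀ(AᵀA + λI)⁻¹ a)². -/

import Mathlib

open Matrix

private lemma dps {k : ℕ} (x : Fin k → ℝ) : 0 ≤ x ⬝ᵥ x :=
  Finset.sum_nonneg fun _ _ => mul_self_nonneg _

/-- Technical leverage-score inequality.  Let `A` have no zero rows, `λ > 0`, and let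
`ψ_i = [A(AᵀA + λI)⁻¹Aᵀ]_{ii}` be the regularized leverage scores.  Then for all `a`,
`Σᵢ (1/ψᵢ)·(A(AᵀA + λI)⁻¹a)ᵢ⁴ ≤ (aᵀ(AᵀA + λI)⁻¹a)²`. -/
theorem stmt15 (m n : ℕ) (A : Matrix (Fin m) (Fin n) ℝ) (hA : ∀ i, A i ≠ 0)
    (lam : ℝ) (hlam : 0 < lam) (a : Fin n → ℝ) :
    ∑ i : Fin m,
        (1 / ((A * (Aᵀ * A + lam • (1 : Matrix (Fin n) (Fin n) ℝ))⁻¹ * Aᵀ) i i)) *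
          (A.mulVec ((Aᵀ * A + lam • (1 : Matrix (Fin n) (Fin n) ℝ))⁻¹.mulVec a) i) ^ 4
      ≤ (a ⬝ᵥ (Aᵀ * A + lam • (1 : Matrix (Fin n) (Fin n) ℝ))⁻¹.mulVec a) ^ 2 := by
  classical
  set M : Matrix (Fin n) (Fin n) ℝ := Aᵀ * A + lam • (1 : Matrix (Fin n) (Fin n) ℝ) with hMdef
  -- lam • 1 is positive definite
  have hsmul : (lam • (1 : Matrix (Fin n) (Fin n) ℝ)).PosDef := by
    refine Matrix.PosDef.of_dotProduct_mulVec_pos ?_ ?_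
    · simp [Matrix.IsHermitian, conjTranspose_eq_transpose_of_trivial]
    · intro x hx
      have h1 : star x ⬝ᵥ (lam • (1 : Matrix (Fin n) (Fin n) ℝ)) *ᵥ x = lam * (x ⬝ᵥ x) := by
        simp [Matrix.smul_mulVec, smul_eq_mul, star_trivial]
      rw [h1]
      exact mul_pos hlam ((dps x).lt_of_ne' fun h =>
        hx (dotProduct_self_eq_zero.mp h))
  have hAtA : (Aᵀ * A).PosSemidef := by
    simpa [conjTranspose_eq_transpose_of_trivial] using posSemidef_conjTranspose_mul_self A
  have hM : M.PosDef := Matrix.PosDef.posSemidef_add hAtA hsmul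
  set B : Matrix (Fin n) (Fin n) ℝ := M⁻¹ with hBdef
  have hB : B.PosDef := hM.inv
  -- factor B = Cᵀ * C
  obtain ⟨C, hC⟩ : ∃ C : Matrix (Fin n) (Fin n) ℝ, B = Cᴴ * C := by
    open scoped MatrixOrder in exact CStarAlgebra.nonneg_iff_eq_star_mul_self.mp hB.posSemidef.nonneg
  have hform : ∀ x y : Fin n → ℝ, x ⬝ᵥ B *ᵥ y = (C *ᵥ x) ⬝ᵥ (C *ᵥ y) := by
    intro x y
    rw [hC, ← Matrix.mulVec_mulVec, Matrix.dotProduct_mulVec x,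
      conjTranspose_eq_transpose_of_trivial, Matrix.vecMul_transpose]
  set v : Fin n → ℝ := B *ᵥ a with hvdef
  set s : ℝ := a ⬝ᵥ v with hsdef
  have hs : s = (C *ᵥ a) ⬝ᵥ (C *ᵥ a) := hform a a
  have hs0 : 0 ≤ s := hs ▸ dps _
  -- ψ i as a quadratic form
  have hpsi : ∀ i, (A * B * Aᵀ) i i = A i ⬝ᵥ B *ᵥ (A i) := by
    intro i
    simp only [Matrix.mul_apply, Matrix.mulVec, dotProduct, transpose_apply,
      Finset.mul_sum, Finset.sum_mul]
    rw [Finset.sum_comm]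
    congr 1; ext j; congr 1; ext k; ring
  have hpsipos : ∀ i, 0 < (A * B * Aᵀ) i i := by
    intro i
    rw [hpsi i]
    simpa [star_trivial] using hB.dotProduct_mulVec_pos (hA i)
  -- Cauchy-Schwarz: (A *ᵥ v) i ^ 2 ≤ ψ i * s
  have hCS : ∀ i, (A *ᵥ v) i ^ 2 ≤ (A * B * Aᵀ) i i * s := by
    intro i
    have h1 : (A *ᵥ v) i = (C *ᵥ (A i)) ⬝ᵥ (C *ᵥ a) := by
      show A i ⬝ᵥ v = _
      rw [hvdef, hform]
    rw [h1, hpsi i, hform, hs]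
    simpa [dotProduct, sq] using
      Finset.sum_mul_sq_le_sq_mul_sq Finset.univ (fun k => (C *ᵥ (A i)) k) (fun k => (C *ᵥ a) k)
  -- sum of squares bound : ∑ (A *ᵥ v) i ^ 2 ≤ s
  have hMv : M *ᵥ v = a := by
    rw [hvdef, hBdef, Matrix.mulVec_mulVec, Matrix.mul_nonsing_inv _ hM.det_pos.ne'.isUnit,
      Matrix.one_mulVec]
  have hsum : ∑ i : Fin m, (A *ᵥ v) i ^ 2 ≤ s := by
    have h0 : ((Aᵀ * A) *ᵥ v) ⬝ᵥ v = (A *ᵥ v) ⬝ᵥ (A *ᵥ v) := by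
      rw [← Matrix.mulVec_mulVec, dotProduct_comm, Matrix.dotProduct_mulVec,
        Matrix.vecMul_transpose]
    have h1 : ∑ i : Fin m, (A *ᵥ v) i ^ 2 = ((Aᵀ * A) *ᵥ v) ⬝ᵥ v := by
      rw [h0]; simp [dotProduct, sq]
    have h2 : (M *ᵥ v) ⬝ᵥ v = ((Aᵀ * A) *ᵥ v) ⬝ᵥ v + lam * (v ⬝ᵥ v) := by
      rw [hMdef, Matrix.add_mulVec, add_dotProduct, Matrix.smul_mulVec,
        Matrix.one_mulVec, smul_dotProduct]
      simp [smul_eq_mul]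
    have h3 : (M *ᵥ v) ⬝ᵥ v = s := by rw [hMv, hsdef]
    have h4 : 0 ≤ lam * (v ⬝ᵥ v) := mul_nonneg hlam.le (dps v)
    rw [h1]; linarith
  -- combine
  calc ∑ i : Fin m, (1 / ((A * B * Aᵀ) i i)) * (A *ᵥ v) i ^ 4
      ≤ ∑ i : Fin m, s * (A *ᵥ v) i ^ 2 := by
        refine Finset.sum_le_sum fun i _ => ?_
        rw [one_div, inv_mul_le_iff₀ (hpsipos i)]
        calc (A *ᵥ v) i ^ 4 = (A *ᵥ v) i ^ 2 * (A *ᵥ v) i ^ 2 := by ring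
          _ ≤ ((A * B * Aᵀ) i i * s) * (A *ᵥ v) i ^ 2 := by
              exact mul_le_mul_of_nonneg_right (hCS i) (sq_nonneg _)
          _ = (A * B * Aᵀ) i i * (s * (A *ᵥ v) i ^ 2) := by ring
    _ = s * ∑ i : Fin m, (A *ᵥ v) i ^ 2 := by rw [Finset.mul_sum]
    _ ≤ s * s := mul_le_mul_of_nonneg_left hsum hs0
    _ = s ^ 2 := (sq s).symm
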